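/- Let f : [0,∞) → ℝ be such that the function g defined by g(x) = f(x)/x for x > 0 and g(0) = 0 satisfies (H1) with constant θ. Then for all integers n ≥ 1: F⁺(n) ≤ 2θ·n² and −f(n) ≤ F⁻(n) ≤ 2θ·n² − f(n). -/

import Mathlib

open MeasureTheory Set

/-- If `g`, defined by `g x = f x / x` for `x > 0` and `g 0 = 0`,
satisfies (H1) with constant `θ` (and `f 0 = 0`), then for all `n ≥ 1`,
`F⁺(n) ≤ 2θ n²` and `-f(n) ≤ F⁻(n) ≤ 2θ n² - f(n)`. -/
theorem stmt4 (f g : ℝ → ℝ) (θ : ℝ) (hθ : 0 ≤ θ)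
    (hf0 : f 0 = 0)
    (hgf : ∀ x > (0:ℝ), g x = f x / x) (hg0 : g 0 = 0)
    (hg_cont : ContinuousOn g (Ici 0))
    (hH1 : ∀ x ≥ (0:ℝ), ∀ y ≥ (0:ℝ), g (x + y) - g y ≤ θ * x) :
    ∀ n : ℕ, 1 ≤ n →
      (∑ ℓ ∈ Finset.Icc 1 n, max (f ℓ - f ((ℓ : ℝ) - 1)) 0) ≤ 2 * θ * n ^ 2 ∧
      -f n ≤ (∑ ℓ ∈ Finset.Icc 1 n, max (-(f ℓ - f ((ℓ : ℝ) - 1))) 0) ∧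
      (∑ ℓ ∈ Finset.Icc 1 n, max (-(f ℓ - f ((ℓ : ℝ) - 1))) 0) ≤ 2 * θ * n ^ 2 - f n := by
  -- f x = x * g x for x ≥ 0
  have hfxg : ∀ x : ℝ, 0 ≤ x → f x = x * g x := by
    intro x hx
    rcases eq_or_lt_of_le hx with h | h
    · rw [← h, hf0]; ring
    · rw [hgf x h]; field_simp
  -- g x ≤ θ x for x ≥ 0
  have hgle : ∀ x : ℝ, 0 ≤ x → g x ≤ θ * x := by
    intro x hx
    have := hH1 x hx 0 le_rfl
    simpa [hg0] using this
  -- per-term bound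
  have hterm : ∀ ℓ : ℕ, 1 ≤ ℓ → f ℓ - f ((ℓ : ℝ) - 1) ≤ 2 * θ * ℓ := by
    intro ℓ hℓ
    have hℓ1 : (1:ℝ) ≤ (ℓ:ℝ) := by exact_mod_cast hℓ
    have h0 : (0:ℝ) ≤ (ℓ:ℝ) - 1 := by linarith
    have h1 := hH1 1 (by norm_num) ((ℓ:ℝ) - 1) h0
    have h2 := hgle ((ℓ:ℝ) - 1) h0
    have e1 : (1:ℝ) + ((ℓ:ℝ) - 1) = (ℓ:ℝ) := by ring
    rw [e1] at h1
    rw [hfxg ℓ (by linarith), hfxg ((ℓ:ℝ) - 1) h0]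
    nlinarith
  set d : ℕ → ℝ := fun ℓ => f ℓ - f ((ℓ : ℝ) - 1) with hd
  intro n hn
  -- telescoping
  have hsum : ∑ ℓ ∈ Finset.Icc 1 n, d ℓ = f n := by
    clear hn
    induction n with
    | zero => simp [hf0]
    | succ k ih =>
      rw [Finset.sum_Icc_succ_top (Nat.succ_le_succ (Nat.zero_le k)), ih]
      simp only [hd]
      push_cast
      ring
  -- F⁺ bound
  have hFp : (∑ ℓ ∈ Finset.Icc 1 n, max (d ℓ) 0) ≤ 2 * θ * n ^ 2 := by
    have hb : ∀ ℓ ∈ Finset.Icc 1 n, max (d ℓ) 0 ≤ 2 * θ * n := by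
      intro ℓ hℓ
      rw [Finset.mem_Icc] at hℓ
      have hln : (ℓ:ℝ) ≤ (n:ℝ) := by exact_mod_cast hℓ.2
      have h1 := hterm ℓ hℓ.1
      have h2 : (0:ℝ) ≤ 2 * θ * n := by positivity
      refine max_le (h1.trans ?_) h2
      nlinarith
    calc (∑ ℓ ∈ Finset.Icc 1 n, max (d ℓ) 0) ≤ ∑ _ℓ ∈ Finset.Icc 1 n, 2 * θ * (n:ℝ) :=
          Finset.sum_le_sum hb
      _ = n * (2 * θ * n) := by
          rw [Finset.sum_const, Nat.card_Icc]
          simp [nsmul_eq_mul]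
      _ = 2 * θ * n ^ 2 := by ring
  have hFp0 : (0:ℝ) ≤ ∑ ℓ ∈ Finset.Icc 1 n, max (d ℓ) 0 :=
    Finset.sum_nonneg fun ℓ _ => le_max_right _ _
  -- F⁻ = F⁺ - f n
  have hFm : (∑ ℓ ∈ Finset.Icc 1 n, max (-(d ℓ)) 0)
      = (∑ ℓ ∈ Finset.Icc 1 n, max (d ℓ) 0) - f n := by
    rw [← hsum, ← Finset.sum_sub_distrib]
    apply Finset.sum_congr rfl
    intro ℓ _
    rcases le_total (d ℓ) 0 with h | h
    · rw [max_eq_left (show (0:ℝ) ≤ -d ℓ by linarith), max_eq_right h]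
      ring
    · rw [max_eq_right (show -d ℓ ≤ (0:ℝ) by linarith), max_eq_left h]
      ring
  refine ⟨hFp, ?_, ?_⟩ <;> rw [hFm] <;> linarith
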